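/- Let q be a prime power and let s, k, m be positive integers with k ≥ 2 and gcd(k, q - 1) = 1. If there exists an F_q-linear code of length m and dimension k with minimum 2-symbol distance d_2, then there exists an F_q-linear code of length s·(q^k - 1)/(q - 1) + m and dimension k with minimum 2-symbol distance s·(q^k - q^{k-2})/(q - 1) + d_2. -/

import Mathlib

set_option maxHeartbeats 1000000


/-- The `b`-symbol weight of a vector `c ∈ F^n` (coordinates indexed cyclically by `ZMod n`). -/
noncomputable def bWt {n : ℕ} {F : Type*} [Zero F] (b : ℕ) (c : ZMod n → F) : ℕ :=
  Nat.card {i : ZMod n | ∃ j < b, c (i + (j : ZMod n)) ≠ 0}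

open Polynomial

private lemma stmt9_sum_periodic (G : ℕ → ℕ) (n : ℕ) (hG : ∀ i, G (i + n) = G i) :
    ∀ s : ℕ, ∑ i ∈ Finset.range (s * n), G i = s * ∑ i ∈ Finset.range n, G i := by
  have hgen : ∀ (j i : ℕ), G (i + j * n) = G i := by
    intro j
    induction j with
    | zero => simp
    | succ j ih =>
      intro i
      have h : i + (j + 1) * n = (i + j * n) + n := by ring
      rw [h, hG, ih]
  intro s
  induction s with
  | zero => simp
  | succ s ih =>
    have h : (s + 1) * n = s * n + n := by ring
    rw [h, Finset.sum_range_add, ih]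
    have h2 : ∀ i, G (s * n + i) = G i := by
      intro i; rw [show s * n + i = i + s * n from by ring, hgen]
    rw [Finset.sum_congr rfl fun i _ => h2 i]
    ring

private lemma stmt9_sum_zmod {M : Type*} [AddCommMonoid M] (n : ℕ) [NeZero n] (G : ZMod n → M) :
    ∑ i : ZMod n, G i = ∑ i ∈ Finset.range n, G (i : ZMod n) := by
  refine (Finset.sum_nbij' (fun i : ℕ => (i : ZMod n)) (fun i : ZMod n => i.val)
    ?_ ?_ ?_ ?_ ?_).symm
  · intro a _; exact Finset.mem_univ _
  · intro a _; exact Finset.mem_range.mpr (ZMod.val_lt a)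
  · intro a ha; exact ZMod.val_natCast_of_lt (Finset.mem_range.mp ha)
  · intro a _; exact ZMod.natCast_rightInverse a
  · intro a _; rfl

open scoped Classical in
private lemma stmt9_bWt_two {F : Type*} [Field F] (n : ℕ) [NeZero n] (v : ZMod n → F) :
    bWt 2 v + ∑ i : ZMod n, (if v i = 0 ∧ v (i + 1) = 0 then 1 else 0) = n := by
  classical
  have hset : {i : ZMod n | ∃ j : ℕ, j < 2 ∧ v (i + (j : ZMod n)) ≠ 0}
      = {i : ZMod n | ¬(v i = 0 ∧ v (i + 1) = 0)} := by
    ext i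
    simp only [Set.mem_setOf_eq, not_and_or]
    constructor
    · rintro ⟨j, hj, hne⟩
      interval_cases j
      · left; simpa using hne
      · right; simpa using hne
    · rintro (h | h)
      · exact ⟨0, by norm_num, by simpa using h⟩
      · exact ⟨1, by norm_num, by simpa using h⟩
  have h1 : bWt 2 v
      = (Finset.univ.filter (fun i : ZMod n => ¬(v i = 0 ∧ v (i + 1) = 0))).card := by
    unfold bWt
    rw [hset, Nat.card_eq_fintype_card]
    exact Fintype.card_subtype _
  have h2 : (∑ i : ZMod n, if v i = 0 ∧ v (i + 1) = 0 then 1 else 0)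
      = (Finset.univ.filter (fun i : ZMod n => v i = 0 ∧ v (i + 1) = 0)).card :=
    (Finset.card_filter _ _).symm
  rw [h1, h2, add_comm]
  rw [Finset.card_filter_add_card_filter_not]
  rw [Finset.card_univ, ZMod.card]

private lemma stmt9_pow_card_mem (F K : Type*) [Field F] [Fintype F] [Field K] [Algebra F K]
    (y : K) (hy : y ^ (Fintype.card F) = y) : ∃ a : F, algebraMap F K a = y := by
  classical
  set q := Fintype.card F with hq
  have hq2 : 1 < q := Fintype.one_lt_card
  set P : K[X] := X ^ q - X with hP
  have hPne : P ≠ 0 := FiniteField.X_pow_card_sub_X_ne_zero K hq2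
  have hdeg : P.natDegree = q := FiniteField.X_pow_card_sub_X_natDegree_eq K hq2
  set S : Finset K := Finset.univ.image (algebraMap F K) with hS
  have hScard : S.card = q := by
    rw [hS, Finset.card_image_of_injective _ (algebraMap F K).injective, Finset.card_univ]
  have hSsub : S ⊆ P.roots.toFinset := by
    intro y' hy'
    obtain ⟨a, -, rfl⟩ := Finset.mem_image.mp hy'
    rw [Multiset.mem_toFinset, Polynomial.mem_roots hPne]
    show P.IsRoot _
    simp only [hP, Polynomial.IsRoot, Polynomial.eval_sub, Polynomial.eval_pow, Polynomial.eval_X]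
    rw [← map_pow, FiniteField.pow_card, sub_self]
  have hcard_le : P.roots.toFinset.card ≤ q :=
    le_trans (Multiset.toFinset_card_le _) (le_trans (Polynomial.card_roots' P) (le_of_eq hdeg))
  have hSeq : S = P.roots.toFinset :=
    Finset.eq_of_subset_of_card_le hSsub (by rw [hScard]; exact hcard_le)
  have hymem : y ∈ P.roots.toFinset := by
    rw [Multiset.mem_toFinset, Polynomial.mem_roots hPne]
    show P.IsRoot _
    simp only [hP, Polynomial.IsRoot, Polynomial.eval_sub, Polynomial.eval_pow, Polynomial.eval_X]
    rw [hy, sub_self]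
  rw [← hSeq] at hymem
  obtain ⟨a, -, ha⟩ := Finset.mem_image.mp hymem
  exact ⟨a, ha⟩

universe uF in
private lemma stmt9_exists_ext (F : Type uF) [Field F] [Fintype F] (k : ℕ) (hk : k ≠ 0) :
    ∃ (K : Type uF) (_ : Field K) (_ : Algebra F K) (_ : Fintype K)
      (_ : FiniteDimensional F K), Fintype.card K = Fintype.card F ^ k := by
  classical
  set q := Fintype.card F with hq
  have hq2 : 1 < q := Fintype.one_lt_card
  obtain ⟨p, hpchar⟩ := CharP.exists F
  haveI : CharP F p := hpchar
  have hpprime : p.Prime := CharP.char_is_prime F p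
  haveI : Fact p.Prime := ⟨hpprime⟩
  obtain ⟨d, -, hqd⟩ := FiniteField.card F p
  have hqk : q ^ k = p ^ ((d : ℕ) * k) := by rw [hq, hqd, ← pow_mul]
  set gp : F[X] := X ^ q ^ k - X with hgp
  let K := gp.SplittingField
  haveI : FiniteDimensional F K := by
    show FiniteDimensional F gp.SplittingField; infer_instance
  haveI : Finite K := Module.finite_of_finite F
  haveI : Fintype K := Fintype.ofFinite K
  haveI : CharP K p := charP_of_injective_algebraMap (algebraMap F K).injective p
  have hpd : p ∣ q ^ k := by
    rw [hqk]; exact dvd_pow_self p (by positivity)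
  have hsep : gp.Separable := galois_poly_separable p (q ^ k) hpd
  have hdeg : gp.natDegree = q ^ k := FiniteField.X_pow_card_pow_sub_X_natDegree_eq F hk hq2
  have hgne : gp ≠ 0 := FiniteField.X_pow_card_pow_sub_X_ne_zero F hk hq2
  have key : Fintype.card (gp.rootSet K) = gp.natDegree :=
    Polynomial.card_rootSet_eq_natDegree hsep (SplittingField.splits gp)
  have hqkne : q ^ k ≠ 0 := by positivity
  have huniv : gp.rootSet K = Set.univ := by
    rw [Set.eq_univ_iff_forall]
    intro x
    have hx : x ∈ (⊤ : Subalgebra F K) := trivial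
    rw [← SplittingField.adjoin_rootSet gp] at hx
    rw [Algebra.mem_adjoin_iff] at hx
    refine Subring.closure_induction ?_ ?_ ?_ ?_ ?_ ?_ hx <;>
      simp_rw [Polynomial.mem_rootSet_of_ne hgne]
    · rintro y (⟨r, rfl⟩ | hy)
      · simp only [hgp, map_sub, map_pow, aeval_X]
        rw [← map_pow, FiniteField.pow_card_pow, sub_self]
      · rwa [Polynomial.mem_rootSet_of_ne hgne] at hy
    · simp [hgp, zero_pow hqkne]
    · simp [hgp]
    · intro a b _ _ ha hb
      simp only [hgp, map_sub, aeval_X_pow, aeval_X, sub_eq_zero] at *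
      rw [hqk, add_pow_char_pow, ← hqk, ha, hb]
    · intro a _ ha
      simp only [hgp, map_sub, aeval_X_pow, aeval_X, sub_eq_zero] at *
      rw [hqk, neg_pow, neg_one_pow_char_pow, ← hqk, ha, neg_one_mul]
    · intro a b _ _ ha hb
      simp only [hgp, map_sub, aeval_X_pow, aeval_X, sub_eq_zero] at *
      rw [mul_pow, ha, hb]
  have hcardK : Fintype.card K = q ^ k := by
    have e : ↥(gp.rootSet K) ≃ K := by rw [huniv]; exact Equiv.Set.univ K
    have h1 : Nat.card ↥(gp.rootSet K) = q ^ k := by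
      rw [Nat.card_eq_fintype_card]
      convert key using 1
      rw [hdeg]
    have h2 : Nat.card K = q ^ k := by rw [← Nat.card_congr e, h1]
    rw [← Nat.card_eq_fintype_card, h2]
  exact ⟨K, inferInstance, inferInstance, inferInstance, inferInstance, hcardK⟩

/-- If `gcd(k, q-1) = 1`, `k ≥ 2`, and there exists an `(m, k, d_2)^2_q` linear code, then
there exists an `(s·(q^k-1)/(q-1) + m, k, s·(q^k - q^{k-2})/(q-1) + d_2)^2_q` linear code. -/
theorem stmt9 (q s k m d : ℕ) (hs : 0 < s) (hk : 2 ≤ k) (hm : 0 < m)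
    (hgcd : Nat.gcd k (q - 1) = 1)
    (F : Type*) [Field F] [Fintype F] (hF : Fintype.card F = q)
    (D : Submodule F (ZMod m → F)) (hdimD : Module.finrank F D = k)
    (hD : IsLeast {w | ∃ c ∈ D, c ≠ 0 ∧ bWt 2 c = w} d) :
    ∃ C : Submodule F (ZMod (s * ((q ^ k - 1) / (q - 1)) + m) → F),
      Module.finrank F C = k ∧
      IsLeast {w | ∃ c ∈ C, c ≠ 0 ∧ bWt 2 c = w}
        (s * ((q ^ k - q ^ (k - 2)) / (q - 1)) + d) := by
  classical
  have hq2 : 2 ≤ q := by rw [← hF]; exact Fintype.one_lt_card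
  have hq1pos : 0 < q - 1 := by omega
  have hdvd : ∀ j : ℕ, (q - 1) ∣ (q ^ j - 1) := by
    intro j; simpa using Nat.sub_dvd_pow_sub_pow q 1 j
  set n1 : ℕ := (q ^ k - 1) / (q - 1) with hn1def
  set lam : ℕ := (q ^ (k - 2) - 1) / (q - 1) with hlamdef
  set Del : ℕ := (q ^ k - q ^ (k - 2)) / (q - 1) with hDeldef
  have hn1 : (q - 1) * n1 = q ^ k - 1 := Nat.mul_div_cancel' (hdvd k)
  have hlam : (q - 1) * lam = q ^ (k - 2) - 1 := Nat.mul_div_cancel' (hdvd (k - 2))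
  have hqk2 : q ^ (k - 2) * q ^ 2 = q ^ k := by rw [← pow_add]; congr 1; omega
  have hsub : q ^ k - q ^ (k - 2) = q ^ (k - 2) * (q ^ 2 - 1) := by
    rw [Nat.mul_sub, hqk2, mul_one]
  have hdvd2 : (q - 1) ∣ (q ^ k - q ^ (k - 2)) := by
    rw [hsub]; exact Dvd.dvd.mul_left (hdvd 2) _
  have hDel : (q - 1) * Del = q ^ k - q ^ (k - 2) := Nat.mul_div_cancel' hdvd2
  have hpk2le : q ^ (k - 2) ≤ q ^ k := Nat.pow_le_pow_right (by omega) (by omega)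
  have hpk2pos : 0 < q ^ (k - 2) := by positivity
  have hqk1 : 2 ≤ q ^ k := le_trans hq2 (Nat.le_self_pow (by omega) q)
  have hlamDel : lam + Del = n1 := by
    apply Nat.eq_of_mul_eq_mul_left hq1pos
    rw [Nat.mul_add, hlam, hDel, hn1]; omega
  have hn1pos : 0 < n1 := by
    rcases Nat.eq_zero_or_pos n1 with h | h
    · exfalso; rw [h, mul_zero] at hn1; omega
    · exact h
  set L : ℕ := s * n1 with hLdef
  have hLpos : 0 < L := Nat.mul_pos hs hn1pos
  haveI : NeZero (L + m) := ⟨by omega⟩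
  haveI : NeZero m := ⟨by omega⟩
  -- The extension field K of degree k
  obtain ⟨K, _, _, _, _, hcardK⟩ := stmt9_exists_ext F k (by omega)
  rw [hF] at hcardK
  have hrankK : Module.finrank F K = k := by
    have hc := Module.card_eq_pow_finrank (K := F) (V := K)
    rw [hcardK, hF] at hc
    exact (Nat.pow_right_injective hq2 hc).symm
  -- generator of Kˣ
  obtain ⟨g, hg⟩ := IsCyclic.exists_generator (α := Kˣ)
  have horder : orderOf g = q ^ k - 1 := by
    rw [orderOf_eq_card_of_forall_mem_zpowers hg, Nat.card_eq_fintype_card,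
      Fintype.card_units, hcardK]
  have hgpow : ∀ u : Kˣ, ∃ i : ℕ, i < q ^ k - 1 ∧ g ^ i = u := by
    intro u
    obtain ⟨z, hz⟩ := Subgroup.mem_zpowers_iff.mp (hg u)
    have hQne : ((q ^ k - 1 : ℕ) : ℤ) ≠ 0 := by
      have : (0:ℕ) < q ^ k - 1 := by omega
      exact_mod_cast this.ne'
    have h2 : (0:ℤ) ≤ z % ((q ^ k - 1 : ℕ) : ℤ) := Int.emod_nonneg z hQne
    have h1 : z % ((q ^ k - 1 : ℕ) : ℤ) < ((q ^ k - 1 : ℕ) : ℤ) :=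
      Int.emod_lt_of_pos z (by omega)
    refine ⟨(z % ((q ^ k - 1 : ℕ) : ℤ)).toNat, by omega, ?_⟩
    have h3 : (((z % ((q ^ k - 1 : ℕ) : ℤ)).toNat : ℤ)) = z % ((q ^ k - 1 : ℕ) : ℤ) :=
      Int.toNat_of_nonneg h2
    have h4 : g ^ (z % ((q ^ k - 1 : ℕ) : ℤ)) = g ^ z := by
      rw [← horder]; exact zpow_mod_orderOf g z
    calc g ^ (z % ((q ^ k - 1 : ℕ) : ℤ)).toNat
        = g ^ (((z % ((q ^ k - 1 : ℕ) : ℤ)).toNat : ℤ)) := (zpow_natCast g _).symm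
      _ = g ^ (z % ((q ^ k - 1 : ℕ) : ℤ)) := by rw [h3]
      _ = g ^ z := h4
      _ = u := hz
  set α : K := (g : K) with hαdef
  have hα0 : α ≠ 0 := Units.ne_zero g
  have hαord : α ^ (q ^ k - 1) = 1 := by
    have h := pow_orderOf_eq_one g
    rw [horder] at h
    have := congrArg (Units.val) h
    simpa [hαdef] using this
  -- the scalar α ^ n1
  obtain ⟨u0, hu0, hu0ne⟩ : ∃ a : F, algebraMap F K a = α ^ n1 ∧ a ≠ 0 := by
    have h1 : (α ^ n1) ^ (q - 1) = 1 := by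
      rw [← pow_mul, show n1 * (q - 1) = q ^ k - 1 from by rw [mul_comm]; exact hn1]
      exact hαord
    have hyq : (α ^ n1) ^ q = α ^ n1 := by
      calc (α ^ n1) ^ q = (α ^ n1) ^ (q - 1) * (α ^ n1) := by
            rw [← pow_succ]; congr 1; omega
        _ = α ^ n1 := by rw [h1, one_mul]
    obtain ⟨a, ha⟩ := stmt9_pow_card_mem F K (α ^ n1) (by rw [hF]; exact hyq)
    refine ⟨a, ha, ?_⟩
    intro h0; rw [h0, map_zero] at ha
    exact (pow_ne_zero n1 hα0) ha.symm
  -- D-side setup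
  haveI : FiniteDimensional F D := inferInstance
  haveI : Nontrivial D := Module.nontrivial_of_finrank_pos (R := F) (by rw [hdimD]; omega)
  obtain ⟨c0, hc0ne⟩ := exists_ne (0 : D)
  have hc0v : (c0 : ZMod m → F) ≠ 0 := fun h => hc0ne (Submodule.coe_eq_zero.mp h)
  obtain ⟨t, hct⟩ : ∃ t : ZMod m, (c0 : ZMod m → F) t ≠ 0 := by
    by_contra h; push_neg at h; exact hc0v (funext h)
  set ψ : D ≃ₗ[F] K := LinearEquiv.ofFinrankEq _ _ (by rw [hdimD, hrankK]) with hψdef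
  set f0 : K →ₗ[F] F := (LinearMap.proj t).comp (D.subtype.comp ψ.symm.toLinearMap) with hf0def
  have hf0ψ : ∀ c : D, f0 (ψ c) = (c : ZMod m → F) t := by
    intro c
    rw [hf0def]
    simp [LinearMap.comp_apply, LinearMap.proj_apply, Submodule.subtype_apply,
      LinearEquiv.coe_coe, LinearEquiv.symm_apply_apply]
  have hf0ne : f0 ≠ 0 := by
    intro h
    apply hct
    have h2 := hf0ψ c0
    rw [h] at h2
    simpa using h2.symm
  -- rank of kernels of nonzero functionals
  have hker_rank : ∀ f : K →ₗ[F] F, f ≠ 0 → Module.finrank F (LinearMap.ker f) = k - 1 := by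
    intro f hf
    have hsurj : LinearMap.range f = ⊤ := by
      obtain ⟨y, hy⟩ : ∃ y, f y ≠ 0 := by
        by_contra hcon; push_neg at hcon
        exact hf (by ext z; simp [hcon z])
      rw [eq_top_iff]
      intro a _
      rw [LinearMap.mem_range]
      exact ⟨(a * (f y)⁻¹) • y, by rw [map_smul, smul_eq_mul, mul_assoc, inv_mul_cancel₀ hy,
        mul_one]⟩
    have h1 := LinearMap.finrank_range_add_finrank_ker f
    rw [hsurj, finrank_top, hrankK, Module.finrank_self] at h1
    omega
  set f1 : K →ₗ[F] F := f0.comp (LinearMap.mulLeft F α) with hf1def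
  have hf1app : ∀ y : K, f1 y = f0 (α * y) := by
    intro y; rw [hf1def]; simp [LinearMap.comp_apply, LinearMap.mulLeft_apply]
  have hf1ne : f1 ≠ 0 := by
    intro h
    apply hf0ne
    apply LinearMap.ext; intro y
    have h2 : f1 (α⁻¹ * y) = 0 := by rw [h]; rfl
    rw [hf1app, ← mul_assoc, mul_inv_cancel₀ hα0, one_mul] at h2
    simpa using h2
  have hkerne : LinearMap.ker f0 ≠ LinearMap.ker f1 := by
    intro heq
    have hstab : ∀ y ∈ LinearMap.ker f0, α * y ∈ LinearMap.ker f0 := by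
      intro y hy
      rw [heq] at hy
      rw [LinearMap.mem_ker]
      rw [LinearMap.mem_ker, hf1app] at hy
      exact hy
    have hstabn : ∀ (n : ℕ) (y : K), y ∈ LinearMap.ker f0 → α ^ n * y ∈ LinearMap.ker f0 := by
      intro n
      induction n with
      | zero => intro y hy; simpa using hy
      | succ n ih =>
        intro y hy
        rw [pow_succ', mul_assoc]
        exact hstab _ (ih y hy)
    have hk1 : Module.finrank F (LinearMap.ker f0) = k - 1 := hker_rank f0 hf0ne
    haveI : Nontrivial (LinearMap.ker f0) :=
      Module.nontrivial_of_finrank_pos (R := F) (by rw [hk1]; omega)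
    obtain ⟨y0, hy0ne⟩ := exists_ne (0 : LinearMap.ker f0)
    have hy0K : (y0 : K) ≠ 0 := fun h => hy0ne (Subtype.ext h)
    have htop : ∀ z : K, z ∈ LinearMap.ker f0 := by
      intro z
      rcases eq_or_ne z 0 with rfl | hz
      · exact (LinearMap.ker f0).zero_mem
      · obtain ⟨i, -, hi⟩ := hgpow (Units.mk0 (z * (y0 : K)⁻¹)
          (mul_ne_zero hz (inv_ne_zero hy0K)))
        have hval : α ^ i = z * (y0 : K)⁻¹ := by
          have := congrArg Units.val hi
          simpa [hαdef] using this
        have h2 := hstabn i (y0 : K) y0.2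
        rw [hval, inv_mul_cancel_right₀ hy0K] at h2
        exact h2
    apply hf0ne
    apply LinearMap.ext; intro y
    simpa using htop y
  have hk0 : Module.finrank F (LinearMap.ker f0) = k - 1 := hker_rank f0 hf0ne
  have hk1 : Module.finrank F (LinearMap.ker f1) = k - 1 := hker_rank f1 hf1ne
  have hsup : LinearMap.ker f0 ⊔ LinearMap.ker f1 = ⊤ := by
    have hlt : LinearMap.ker f0 < LinearMap.ker f0 ⊔ LinearMap.ker f1 := by
      refine lt_of_le_of_ne le_sup_left ?_
      intro heq2
      have hle : LinearMap.ker f1 ≤ LinearMap.ker f0 := le_sup_right.trans heq2.ge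
      have := Submodule.eq_of_le_of_finrank_le hle (by rw [hk0, hk1])
      exact hkerne this.symm
    have hfl := Submodule.finrank_lt_finrank_of_lt hlt
    rw [hk0] at hfl
    have hle2 : Module.finrank F ↥(LinearMap.ker f0 ⊔ LinearMap.ker f1) ≤ k :=
      (Submodule.finrank_le _).trans (le_of_eq hrankK)
    apply Submodule.eq_top_of_finrank_eq
    rw [hrankK]; omega
  set T : Submodule F K := (LinearMap.ker f0) ⊓ (LinearMap.ker f1) with hTdef
  have hrankT : Module.finrank F T = k - 2 := by
    have hsum := Submodule.finrank_sup_add_finrank_inf_eq (LinearMap.ker f0) (LinearMap.ker f1)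
    rw [hsup, finrank_top, hrankK, hk0, hk1, ← hTdef] at hsum
    omega
  have hTmem : ∀ y : K, y ∈ T ↔ (f0 y = 0 ∧ f0 (α * y) = 0) := by
    intro y
    rw [hTdef]
    simp only [Submodule.mem_inf, LinearMap.mem_ker]
    rw [hf1app]
  -- the linear embedding Φ
  set Φ : D →ₗ[F] (ZMod (L + m) → F) := LinearMap.pi (fun i : ZMod (L + m) =>
    if i.val < L then ((f0.comp (LinearMap.mulLeft F (α ^ i.val))).comp ψ.toLinearMap)
    else ((LinearMap.proj (t + ((i.val - L : ℕ) : ZMod m))).comp D.subtype)) with hΦdef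
  have hΦval : ∀ (c : D) (i : ZMod (L + m)), Φ c i =
      if i.val < L then f0 (α ^ i.val * ψ c)
      else (c : ZMod m → F) (t + ((i.val - L : ℕ) : ZMod m)) := by
    intro c i
    rw [hΦdef, LinearMap.pi_apply]
    split_ifs with h <;>
      simp [LinearMap.comp_apply, LinearMap.mulLeft_apply, LinearMap.proj_apply,
        Submodule.subtype_apply, LinearEquiv.coe_coe]
  have hvA : ∀ (c : D) (i : ℕ), i < L → Φ c ((i : ℕ) : ZMod (L + m)) = f0 (α ^ i * ψ c) := by
    intro c i hi
    have hval : ((i : ℕ) : ZMod (L + m)).val = i := ZMod.val_natCast_of_lt (by omega)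
    rw [hΦval, hval, if_pos hi]
  have hvB : ∀ (c : D) (j : ℕ), j < m →
      Φ c (((L + j : ℕ)) : ZMod (L + m)) = (c : ZMod m → F) (t + (j : ZMod m)) := by
    intro c j hj
    have hval : ((L + j : ℕ) : ZMod (L + m)).val = L + j := ZMod.val_natCast_of_lt (by omega)
    rw [hΦval, hval, if_neg (by omega)]
    have h2 : L + j - L = j := by omega
    rw [h2]
  -- injectivity
  have hΦinj : Function.Injective Φ := by
    rw [← LinearMap.ker_eq_bot]
    rw [Submodule.eq_bot_iff]
    intro c hc
    rw [LinearMap.mem_ker] at hc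
    have hall : ∀ u : ZMod m, (c : ZMod m → F) u = 0 := by
      intro u
      have hj := hvB c ((u - t).val) (ZMod.val_lt _)
      rw [hc] at hj
      have hcast : (((u - t).val : ℕ) : ZMod m) = u - t := ZMod.natCast_rightInverse _
      rw [hcast, add_sub_cancel] at hj
      simpa using hj.symm
    exact Submodule.coe_eq_zero.mp (funext hall)
  have hrankC : Module.finrank F (LinearMap.range Φ) = k := by
    have h1 := LinearMap.finrank_range_add_finrank_ker Φ
    rw [LinearMap.ker_eq_bot.mpr hΦinj, finrank_bot, hdimD] at h1
    omega
  -- the key counting identity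
  have hkey : ∀ c : D, c ≠ 0 →
      (∑ i : ZMod (L + m), if Φ c i = 0 ∧ Φ c (i + 1) = 0 then 1 else 0)
        = s * lam + ∑ u : ZMod m,
            if (c : ZMod m → F) u = 0 ∧ (c : ZMod m → F) (u + 1) = 0 then 1 else 0 := by
    intro c hc
    have hxne : ψ c ≠ 0 := fun h => hc (by rwa [LinearEquiv.map_eq_zero_iff] at h)
    set e : ℕ → F := fun i => f0 (α ^ i * ψ c) with he
    have hper : ∀ i, (e (i + n1) = 0 ↔ e i = 0) := by
      intro i
      have hsm : α ^ (i + n1) * ψ c = u0 • (α ^ i * ψ c) := by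
        rw [pow_add, Algebra.smul_def, hu0]; ring
      simp only [he]
      rw [hsm, map_smul, smul_eq_mul, mul_eq_zero]
      simp [hu0ne]
    have hperiter : ∀ (j i : ℕ), (e (i + j * n1) = 0 ↔ e i = 0) := by
      intro j
      induction j with
      | zero => simp
      | succ j ih =>
        intro i
        rw [show i + (j + 1) * n1 = (i + j * n1) + n1 from by ring, hper, ih]
    have he0 : e 0 = (c : ZMod m → F) t := by
      simp only [he, pow_zero, one_mul]
      exact hf0ψ c
    have heL : (e L = 0 ↔ (c : ZMod m → F) t = 0) := by
      rw [← he0, hLdef]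
      have h := hperiter s 0
      rw [zero_add] at h
      exact h
    have hTper : ∀ i : ℕ, (α ^ (i + n1) * ψ c ∈ T ↔ α ^ i * ψ c ∈ T) := by
      intro i
      have hsm : α ^ (i + n1) * ψ c = u0 • (α ^ i * ψ c) := by
        rw [pow_add, Algebra.smul_def, hu0]; ring
      rw [hsm]
      exact Submodule.smul_mem_iff T hu0ne
    -- the count over one full period of q^k - 1
    have hcount1 : ((Finset.range (q ^ k - 1)).filter (fun i => α ^ i * ψ c ∈ T)).card
        = q ^ (k - 2) - 1 := by
      have hTcard : Fintype.card T = q ^ (k - 2) := by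
        rw [Module.card_eq_pow_finrank (K := F) (V := T), hF, hrankT]
      have h1 : (Finset.univ.filter (fun y : K => y ∈ T)).card = q ^ (k - 2) := by
        rw [← hTcard]; exact (Fintype.card_subtype _).symm
      have h2 : (Finset.univ.filter (fun y : K => y ∈ T ∧ y ≠ 0)) =
          (Finset.univ.filter (fun y : K => y ∈ T)).erase 0 := by
        ext y
        simp only [Finset.mem_filter, Finset.mem_erase, Finset.mem_univ, true_and]
        tauto
      have htarget : (Finset.univ.filter (fun y : K => y ∈ T ∧ y ≠ 0)).card
          = q ^ (k - 2) - 1 := by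
        rw [h2, Finset.card_erase_of_mem (by simp [T.zero_mem]), h1]
      rw [← htarget]
      apply Finset.card_bij (fun i _ => α ^ i * ψ c)
      · intro i hi
        simp only [Finset.mem_filter] at hi ⊢
        exact ⟨Finset.mem_univ _, (hi.2), mul_ne_zero (pow_ne_zero _ hα0) hxne⟩
      · intro i₁ h₁ i₂ h₂ heq
        have h3 : α ^ i₁ = α ^ i₂ := mul_right_cancel₀ hxne heq
        have h4 : g ^ i₁ = g ^ i₂ := Units.ext (by simpa [hαdef] using h3)
        exact pow_injOn_Iio_orderOf
          (by rw [horder]; exact Set.mem_Iio.mpr (Finset.mem_range.mp (Finset.mem_filter.mp h₁).1))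
          (by rw [horder]; exact Set.mem_Iio.mpr (Finset.mem_range.mp (Finset.mem_filter.mp h₂).1))
          h4
      · intro y hy
        simp only [Finset.mem_filter, Finset.mem_univ, true_and] at hy
        obtain ⟨hyT, hyne⟩ := hy
        obtain ⟨i, hilt, hi⟩ := hgpow (Units.mk0 (y * (ψ c)⁻¹)
          (mul_ne_zero hyne (inv_ne_zero hxne)))
        have hval : α ^ i = y * (ψ c)⁻¹ := by
          have := congrArg Units.val hi
          simpa [hαdef] using this
        have hαy : α ^ i * ψ c = y := by rw [hval, inv_mul_cancel_right₀ hxne]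
        refine ⟨i, Finset.mem_filter.mpr ⟨Finset.mem_range.mpr hilt, ?_⟩, hαy⟩
        rw [hαy]; exact hyT
    have hcore : (∑ i ∈ Finset.range n1, if α ^ i * ψ c ∈ T then 1 else 0) = lam := by
      apply Nat.eq_of_mul_eq_mul_left hq1pos
      have hsum := stmt9_sum_periodic (fun i => if α ^ i * ψ c ∈ T then 1 else 0) n1
        (fun i => if_congr (hTper i) rfl rfl) (q - 1)
      rw [← hsum, hn1, ← Finset.card_filter, hcount1, hlam]
    have hA : (∑ i ∈ Finset.range L, if e i = 0 ∧ e (i + 1) = 0 then 1 else 0) = s * lam := by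
      have hGper : ∀ i, ((if e (i + n1) = 0 ∧ e (i + n1 + 1) = 0 then (1:ℕ) else 0)
          = if e i = 0 ∧ e (i + 1) = 0 then 1 else 0) := by
        intro i
        have h2 : (e (i + n1 + 1) = 0) ↔ (e (i + 1) = 0) := by
          rw [show i + n1 + 1 = (i + 1) + n1 from by ring]; exact hper (i + 1)
        exact if_congr (and_congr (hper i) h2) rfl rfl
      rw [hLdef, stmt9_sum_periodic (fun i => if e i = 0 ∧ e (i + 1) = 0 then 1 else 0)
        n1 hGper s]
      congr 1
      rw [← hcore]
      apply Finset.sum_congr rfl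
      intro i _
      apply if_congr _ rfl rfl
      rw [hTmem]
      simp only [he]
      constructor
      · rintro ⟨ha, hb⟩
        refine ⟨ha, ?_⟩
        rw [← mul_assoc, ← pow_succ']
        exact hb
      · rintro ⟨ha, hb⟩
        refine ⟨ha, ?_⟩
        rw [pow_succ', mul_assoc]
        exact hb
    have hdecomp : (∑ i : ZMod (L + m), if Φ c i = 0 ∧ Φ c (i + 1) = 0 then 1 else 0)
        = (∑ i ∈ Finset.range L, if e i = 0 ∧ e (i + 1) = 0 then 1 else 0)
          + (∑ j ∈ Finset.range m, if (c : ZMod m → F) (t + (j : ZMod m)) = 0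
              ∧ (c : ZMod m → F) (t + (j : ZMod m) + 1) = 0 then 1 else 0) := by
      refine Eq.trans (stmt9_sum_zmod (L + m)
        (fun i => if Φ c i = 0 ∧ Φ c (i + 1) = 0 then 1 else 0)) ?_
      rw [Finset.sum_range_add]
      congr 1
      · apply Finset.sum_congr rfl
        intro i hi
        have hiL : i < L := Finset.mem_range.mp hi
        have hΦi : Φ c ((i : ℕ) : ZMod (L + m)) = e i := hvA c i hiL
        have hnext : (((i : ℕ) : ZMod (L + m)) + 1) = (((i + 1 : ℕ)) : ZMod (L + m)) := by
          push_cast; ring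
        rw [hΦi, hnext]
        by_cases h : i + 1 < L
        · rw [hvA c (i + 1) h]
        · have h : i + 1 = L := by omega
          rw [h]
          have hL0' : Φ c ((L : ℕ) : ZMod (L + m)) = (c : ZMod m → F) t := by
            have h5 := hvB c 0 (by omega)
            simpa using h5
          rw [hL0']
          exact if_congr (and_congr Iff.rfl heL.symm) rfl rfl
      · apply Finset.sum_congr rfl
        intro j hj
        have hjm : j < m := Finset.mem_range.mp hj
        rw [hvB c j hjm]
        have hnext : (((L + j : ℕ)) : ZMod (L + m)) + 1 = (((L + (j + 1) : ℕ)) : ZMod (L + m)) := by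
          push_cast; ring
        rw [hnext]
        by_cases h : j + 1 < m
        · rw [hvB c (j + 1) h]
          have h6 : (t + ((j + 1 : ℕ) : ZMod m)) = t + (j : ZMod m) + 1 := by
            push_cast; ring
          rw [h6]
        · have h : j + 1 = m := by omega
          have hLN : (((L + (j + 1) : ℕ)) : ZMod (L + m)) = 0 := by
            rw [h]; exact ZMod.natCast_self (L + m)
          rw [hLN]
          have h0 : Φ c (0 : ZMod (L + m)) = (c : ZMod m → F) t := by
            have h7 := hvA c 0 hLpos
            rw [Nat.cast_zero, pow_zero, one_mul, hf0ψ c] at h7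
            exact h7
          rw [h0]
          have h8 : (t + (j : ZMod m) + 1) = t := by
            have h9 : ((j : ZMod m) + 1) = ((j + 1 : ℕ) : ZMod m) := by push_cast; ring
            rw [add_assoc, h9, h, ZMod.natCast_self, add_zero]
          rw [h8]
    have hB : (∑ j ∈ Finset.range m, if (c : ZMod m → F) (t + (j : ZMod m)) = 0
          ∧ (c : ZMod m → F) (t + (j : ZMod m) + 1) = 0 then 1 else 0)
        = ∑ u : ZMod m, if (c : ZMod m → F) u = 0 ∧ (c : ZMod m → F) (u + 1) = 0 then 1 else 0 := by
      refine Finset.sum_nbij' (fun j : ℕ => t + (j : ZMod m)) (fun u : ZMod m => (u - t).val)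
        ?_ ?_ ?_ ?_ ?_
      · intro a _; exact Finset.mem_univ _
      · intro u _; exact Finset.mem_range.mpr (ZMod.val_lt _)
      · intro j hj
        rw [add_sub_cancel_left]
        exact ZMod.val_natCast_of_lt (Finset.mem_range.mp hj)
      · intro u _
        have h10 : (((u - t).val : ℕ) : ZMod m) = u - t := ZMod.natCast_rightInverse _
        rw [h10, add_sub_cancel]
      · intro j hj; rfl
    rw [hdecomp, hA, hB]
  -- the weight identity
  have hweight : ∀ c : D, c ≠ 0 → bWt 2 (Φ c) = s * Del + bWt 2 (c : ZMod m → F) := by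
    intro c hc
    have h1 := stmt9_bWt_two (L + m) (Φ c)
    have h2 := stmt9_bWt_two m ((c : ZMod m → F))
    have h3 := hkey c hc
    have h4 : s * lam + s * Del = s * n1 := by rw [← Nat.mul_add, hlamDel]
    have h5 : L = s * n1 := hLdef
    omega
  refine ⟨LinearMap.range Φ, hrankC, ?_, ?_⟩
  · obtain ⟨c, hcD, hcne, hcw⟩ := hD.1
    have hne0 : (⟨c, hcD⟩ : D) ≠ 0 := by
      intro h
      exact hcne (by simpa using congrArg Subtype.val h)
    refine ⟨Φ ⟨c, hcD⟩, LinearMap.mem_range_self _ _, ?_, ?_⟩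
    · intro h0
      exact hne0 (hΦinj (by rw [h0, map_zero]))
    · rw [hweight ⟨c, hcD⟩ hne0]
      show s * Del + bWt 2 c = s * Del + d
      rw [hcw]
  · rintro w ⟨v, hvC, hvne, rfl⟩
    obtain ⟨c, rfl⟩ := LinearMap.mem_range.mp hvC
    have hcne : c ≠ 0 := fun h => hvne (by rw [h, map_zero])
    rw [hweight c hcne]
    have hmem : bWt 2 ((c : ZMod m → F)) ∈ {w | ∃ c' ∈ D, c' ≠ 0 ∧ bWt 2 c' = w} :=
      ⟨(c : ZMod m → F), c.2, fun h => hcne (Submodule.coe_eq_zero.mp h), rfl⟩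
    exact Nat.add_le_add_left (hD.2 hmem) _
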